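/- Let T > 0, L ≥ 0 and S̃ ≥ 0, let f : ℝⁿ → ℝⁿ be Lipschitz with constant L, let η : ℝⁿ → ℝⁿ be continuous, and let x, z : [0,T] → ℝⁿ be differentiable with x'(t) = f(x t) + η(x t), z'(t) = f(z t), and z(0) = x(0). Assume k : ℝⁿ → H is continuous with ‖k a − k b‖ ≤ S̃·‖a − b‖ for all a, b in a set containing the images of x and z, and let Γ_x and Γ_z be the occupation kernels of x and z over [0,T]. Let g ∈ H lie in both D(A_f) and D(A_η), so that g ∈ D(A_{f+η}) with A_{f+η} g = A_f g + A_η g. Then | ⟪A_{f+η} g, Γ_x⟫ − ⟪A_f g, Γ_z⟫ | ≤ ‖A_η g‖·‖Γ_x‖ + ‖A_f g‖ · S̃ · √T · √( ∫₀ᵀ e^{2 L t} ( ∫₀ᵗ e^{−L τ} ‖η(x τ)‖ dτ )² dt ). -/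

import Mathlib

open scoped RealInnerProductSpace

/-- Cauchy–Schwarz for interval integrals of a continuous function:
`∫₀ᵀ B ≤ √T · √(∫₀ᵀ B²)`. -/
lemma my_integral_le_sqrt_mul_sqrt {B : ℝ → ℝ} (hB : Continuous B) {T : ℝ} (hT : 0 < T) :
    (∫ t in (0:ℝ)..T, B t) ≤ Real.sqrt T * Real.sqrt (∫ t in (0:ℝ)..T, (B t) ^ 2) := by
  set J : ℝ := ∫ t in (0:ℝ)..T, B t with hJ
  set K : ℝ := ∫ t in (0:ℝ)..T, (B t) ^ 2 with hK
  have hBi : IntervalIntegrable B MeasureTheory.volume 0 T := hB.intervalIntegrable _ _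
  have hB2i : IntervalIntegrable (fun t => (B t) ^ 2) MeasureTheory.volume 0 T :=
    (hB.pow 2).intervalIntegrable _ _
  have hexp : (∫ t in (0:ℝ)..T, (T * B t - J) ^ 2) = T ^ 2 * K - T * J ^ 2 := by
    have h1 : ∀ t : ℝ, (T * B t - J) ^ 2
        = T ^ 2 * (B t) ^ 2 - (2 * T * J) * B t + J ^ 2 := by
      intro t; ring
    simp_rw [h1]
    rw [intervalIntegral.integral_add
      ((hB2i.const_mul (T ^ 2)).sub (hBi.const_mul (2 * T * J)))
      (intervalIntegrable_const),
      intervalIntegral.integral_sub (hB2i.const_mul (T ^ 2)) (hBi.const_mul (2 * T * J)),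
      intervalIntegral.integral_const_mul, intervalIntegral.integral_const_mul,
      intervalIntegral.integral_const, smul_eq_mul, ← hJ, ← hK]
    ring
  have hnn : 0 ≤ ∫ t in (0:ℝ)..T, (T * B t - J) ^ 2 :=
    intervalIntegral.integral_nonneg hT.le (fun t _ => sq_nonneg _)
  have hJK : J ^ 2 ≤ T * K := by
    rw [hexp] at hnn
    nlinarith [hT]
  calc J ≤ |J| := le_abs_self J
    _ = Real.sqrt (J ^ 2) := (Real.sqrt_sq_eq_abs J).symm
    _ ≤ Real.sqrt (T * K) := Real.sqrt_le_sqrt hJK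
    _ = Real.sqrt T * Real.sqrt K := Real.sqrt_mul hT.le K

theorem process_noise_sample_bound
    {n : ℕ} (hn : 1 ≤ n) {H : Type*} [NormedAddCommGroup H] [InnerProductSpace ℝ H]
    [CompleteSpace H]
    (ι : H →ₗ[ℝ] (EuclideanSpace ℝ (Fin n) → ℝ)) (hι : Function.Injective ι)
    (k : EuclideanSpace ℝ (Fin n) → H)
    (hrep : ∀ (g : H) (x : EuclideanSpace ℝ (Fin n)), ι g x = ⟪g, k x⟫)
    (hk : Continuous k)
    (hdiff : ∀ (g : H) (x : EuclideanSpace ℝ (Fin n)), DifferentiableAt ℝ (ι g) x)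
    (T L St : ℝ) (hT : 0 < T) (hL : 0 ≤ L) (hSt : 0 ≤ St)
    (f η : EuclideanSpace ℝ (Fin n) → EuclideanSpace ℝ (Fin n))
    (hf : LipschitzWith (Real.toNNReal L) f) (hη : Continuous η)
    (x z : ℝ → EuclideanSpace ℝ (Fin n))
    (hx : ∀ t ∈ Set.Icc (0:ℝ) T, HasDerivAt x (f (x t) + η (x t)) t)
    (hz : ∀ t ∈ Set.Icc (0:ℝ) T, HasDerivAt z (f (z t)) t)
    (h0 : z 0 = x 0)
    (Ω : Set (EuclideanSpace ℝ (Fin n)))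
    (hΩx : ∀ t ∈ Set.Icc (0:ℝ) T, x t ∈ Ω)
    (hΩz : ∀ t ∈ Set.Icc (0:ℝ) T, z t ∈ Ω)
    (hkLip : ∀ a ∈ Ω, ∀ b ∈ Ω, ‖k a - k b‖ ≤ St * ‖a - b‖)
    (Γx Γz : H)
    (hΓx : ∀ g : H, ⟪g, Γx⟫ = ∫ t in (0:ℝ)..T, ι g (x t))
    (hΓz : ∀ g : H, ⟪g, Γz⟫ = ∫ t in (0:ℝ)..T, ι g (z t))
    (g Afg Aηg : H)
    (hAf : ∀ y : EuclideanSpace ℝ (Fin n), ι Afg y = fderiv ℝ (ι g) y (f y))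
    (hAη : ∀ y : EuclideanSpace ℝ (Fin n), ι Aηg y = fderiv ℝ (ι g) y (η y)) :
    |⟪Afg + Aηg, Γx⟫ - ⟪Afg, Γz⟫| ≤
      ‖Aηg‖ * ‖Γx‖ + ‖Afg‖ * St * Real.sqrt T *
        Real.sqrt (∫ t in (0:ℝ)..T, Real.exp (2 * L * t) *
          (∫ τ in (0:ℝ)..t, Real.exp (-L * τ) * ‖η (x τ)‖) ^ 2) := by
  -- continuity of the curves on [0, T]
  have hxc : ContinuousOn x (Set.Icc 0 T) := fun t ht =>
    (hx t ht).continuousAt.continuousWithinAt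
  have hzc : ContinuousOn z (Set.Icc 0 T) := fun t ht =>
    (hz t ht).continuousAt.continuousWithinAt
  -- clamp to [0, T]
  set p : ℝ → ℝ := fun t => max 0 (min t T) with hp
  have hpc : Continuous p := continuous_const.max (continuous_id.min continuous_const)
  have hpmem : ∀ t, p t ∈ Set.Icc (0:ℝ) T := by
    intro t
    constructor
    · exact le_max_left _ _
    · exact max_le (by linarith) (min_le_right _ _)
  have hpid : ∀ t ∈ Set.Icc (0:ℝ) T, p t = t := by
    intro t ht
    simp only [hp]
    rw [min_eq_left ht.2, max_eq_right ht.1]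
  set xc : ℝ → EuclideanSpace ℝ (Fin n) := fun t => x (p t) with hxcdef
  have hxcc : Continuous xc := hxc.comp_continuous hpc hpmem
  have hxceq : ∀ t ∈ Set.Icc (0:ℝ) T, xc t = x t := fun t ht => by
    simp only [hxcdef, hpid t ht]
  -- the forcing term and its exponential-weighted integral
  set φ : ℝ → ℝ := fun τ => Real.exp (-L * τ) * ‖η (xc τ)‖ with hφdef
  have hφc : Continuous φ :=
    ((Real.continuous_exp.comp (continuous_const.mul continuous_id)).mul
      ((hη.comp hxcc).norm))
  have hφnn : ∀ τ, 0 ≤ φ τ := fun τ =>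
    mul_nonneg (Real.exp_pos _).le (norm_nonneg _)
  set w : ℝ → ℝ := fun t => ∫ τ in (0:ℝ)..t, φ τ with hwdef
  have hw : ∀ t, HasDerivAt w (φ t) t := fun t =>
    intervalIntegral.integral_hasDerivAt_right (hφc.intervalIntegrable _ _)
      hφc.stronglyMeasurable.stronglyMeasurableAtFilter hφc.continuousAt
  have hwc : Continuous w := continuous_iff_continuousAt.2 fun t => (hw t).continuousAt
  set B : ℝ → ℝ := fun t => Real.exp (L * t) * w t with hBdef
  have hBc : Continuous B :=
    (Real.continuous_exp.comp (continuous_const.mul continuous_id)).mul hwc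
  have hBderiv : ∀ t, HasDerivAt B (L * B t + ‖η (xc t)‖) t := by
    intro t
    have h1 : HasDerivAt (fun s => Real.exp (L * s)) (Real.exp (L * t) * L) t := by
      simpa using ((hasDerivAt_id' t).const_mul L).exp
    have h2 := h1.mul (hw t)
    refine HasDerivAt.congr_deriv h2 ?_
    have hconv : Real.exp (L * t) * φ t = ‖η (xc t)‖ := by
      simp only [hφdef]
      rw [← mul_assoc, ← Real.exp_add]
      have : L * t + -L * t = 0 := by ring
      rw [this, Real.exp_zero, one_mul]
    rw [hconv]
    simp only [hBdef]
    ring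
  have hB0 : B 0 = 0 := by
    simp [hBdef, hwdef]
  -- Grönwall estimate
  have hLcoe : ((Real.toNNReal L : NNReal) : ℝ) = L := Real.coe_toNNReal L hL
  have key : ∀ t ∈ Set.Icc (0:ℝ) T, ‖x t - z t‖ ≤ B t := by
    intro t ht
    have hgen : ∀ ε > (0:ℝ), ‖x t - z t‖ ≤ B t + ε * Real.exp ((L + 1) * t) := by
      intro ε hε
      have hFc : ContinuousOn (fun s => x s - z s) (Set.Icc 0 T) := hxc.sub hzc
      have hF' : ∀ s ∈ Set.Ico (0:ℝ) T,
          HasDerivWithinAt (fun s => x s - z s)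
            ((f (x s) + η (x s)) - f (z s)) (Set.Ici s) s := by
        intro s hs
        have hs' : s ∈ Set.Icc (0:ℝ) T := ⟨hs.1, hs.2.le⟩
        exact ((hx s hs').sub (hz s hs')).hasDerivWithinAt
      have hEderiv : ∀ s, HasDerivAt (fun u => ε * Real.exp ((L + 1) * u))
          (ε * ((L + 1) * Real.exp ((L + 1) * s))) s := by
        intro s
        have h1 : HasDerivAt (fun u => Real.exp ((L + 1) * u))
            (Real.exp ((L + 1) * s) * (L + 1)) s := by
          simpa using
            ((hasDerivAt_id' s).const_mul (L + 1)).exp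
        have := h1.const_mul ε
        refine HasDerivAt.congr_deriv this ?_
        ring
      have hBd : ∀ s, HasDerivAt (fun u => B u + ε * Real.exp ((L + 1) * u))
          ((L * B s + ‖η (xc s)‖) + ε * ((L + 1) * Real.exp ((L + 1) * s))) s :=
        fun s => (hBderiv s).add (hEderiv s)
      have hres := image_norm_le_of_norm_deriv_right_lt_deriv_boundary hFc hF'
        (by
          rw [h0, sub_self, norm_zero, hB0, zero_add, mul_zero, Real.exp_zero, mul_one]
          exact hε.le)
        hBd
        (by
          intro s hs heq
          have hs' : s ∈ Set.Icc (0:ℝ) T := ⟨hs.1, hs.2.le⟩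
          have hrw : f (x s) + η (x s) - f (z s) = (f (x s) - f (z s)) + η (x s) := by abel
          have hlip : ‖f (x s) - f (z s)‖ ≤ L * ‖x s - z s‖ := by
            have := hf.dist_le_mul (x s) (z s)
            rwa [hLcoe, dist_eq_norm, dist_eq_norm] at this
          have h1 : ‖f (x s) + η (x s) - f (z s)‖ ≤ L * ‖x s - z s‖ + ‖η (x s)‖ := by
            rw [hrw]
            exact (norm_add_le _ _).trans (by linarith [hlip])
          have hxcs : xc s = x s := hxceq s hs'
          have hexppos : 0 < Real.exp ((L + 1) * s) := Real.exp_pos _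
          calc ‖f (x s) + η (x s) - f (z s)‖
              ≤ L * ‖x s - z s‖ + ‖η (x s)‖ := h1
            _ = L * (B s + ε * Real.exp ((L + 1) * s)) + ‖η (xc s)‖ := by
                rw [heq, hxcs]
            _ < (L * B s + ‖η (xc s)‖) + ε * ((L + 1) * Real.exp ((L + 1) * s)) := by
                nlinarith [hexppos, hε])
      exact hres ht
    -- pass to the limit ε → 0
    have hexppos : 0 < Real.exp ((L + 1) * t) := Real.exp_pos _
    refine le_of_forall_pos_le_add ?_
    intro δ hδ
    have := hgen (δ / Real.exp ((L + 1) * t)) (div_pos hδ hexppos)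
    rwa [div_mul_cancel₀ _ (ne_of_gt hexppos)] at this
  -- nonnegativity of B on [0, T]
  have hBnn : ∀ t ∈ Set.Icc (0:ℝ) T, 0 ≤ B t := by
    intro t ht
    exact mul_nonneg (Real.exp_pos _).le
      (intervalIntegral.integral_nonneg ht.1 fun τ _ => hφnn τ)
  -- rewrite the inner products as integrals
  have hcont_x : ContinuousOn (fun t => (⟪Afg, k (x t)⟫ : ℝ)) (Set.Icc 0 T) :=
    (continuous_const.inner hk).comp_continuousOn hxc
  have hcont_z : ContinuousOn (fun t => (⟪Afg, k (z t)⟫ : ℝ)) (Set.Icc 0 T) :=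
    (continuous_const.inner hk).comp_continuousOn hzc
  have hintx : IntervalIntegrable (fun t => (⟪Afg, k (x t)⟫ : ℝ))
      MeasureTheory.volume 0 T := by
    apply ContinuousOn.intervalIntegrable
    rwa [Set.uIcc_of_le hT.le]
  have hintz : IntervalIntegrable (fun t => (⟪Afg, k (z t)⟫ : ℝ))
      MeasureTheory.volume 0 T := by
    apply ContinuousOn.intervalIntegrable
    rwa [Set.uIcc_of_le hT.le]
  have hIdiff : ⟪Afg, Γx⟫ - ⟪Afg, Γz⟫
      = ∫ t in (0:ℝ)..T, (⟪Afg, k (x t)⟫ - ⟪Afg, k (z t)⟫ : ℝ) := by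
    rw [hΓx, hΓz]
    rw [← intervalIntegral.integral_sub]
    · congr 1
      funext t
      rw [hrep, hrep]
    · simpa only [hrep] using hintx
    · simpa only [hrep] using hintz
  -- pointwise bound on the integrand
  have hptbd : ∀ t ∈ Set.Icc (0:ℝ) T,
      |(⟪Afg, k (x t)⟫ - ⟪Afg, k (z t)⟫ : ℝ)| ≤ ‖Afg‖ * St * B t := by
    intro t ht
    have h1 : (⟪Afg, k (x t)⟫ - ⟪Afg, k (z t)⟫ : ℝ) = ⟪Afg, k (x t) - k (z t)⟫ := by
      rw [inner_sub_right]
    rw [h1]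
    calc |(⟪Afg, k (x t) - k (z t)⟫ : ℝ)| ≤ ‖Afg‖ * ‖k (x t) - k (z t)‖ :=
          abs_real_inner_le_norm _ _
      _ ≤ ‖Afg‖ * (St * ‖x t - z t‖) := by
          apply mul_le_mul_of_nonneg_left _ (norm_nonneg _)
          exact hkLip _ (hΩx t ht) _ (hΩz t ht)
      _ ≤ ‖Afg‖ * (St * B t) := by
          apply mul_le_mul_of_nonneg_left _ (norm_nonneg _)
          exact mul_le_mul_of_nonneg_left (key t ht) hSt
      _ = ‖Afg‖ * St * B t := by ring
  -- bound the second term by the integral of B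
  have hsecond : |⟪Afg, Γx⟫ - ⟪Afg, Γz⟫| ≤ ‖Afg‖ * St * ∫ t in (0:ℝ)..T, B t := by
    rw [hIdiff]
    have habs := intervalIntegral.abs_integral_le_integral_abs (f := fun t =>
      (⟪Afg, k (x t)⟫ - ⟪Afg, k (z t)⟫ : ℝ)) (μ := MeasureTheory.volume) (a := 0) (b := T) hT.le
    refine habs.trans ?_
    have hmono : (∫ t in (0:ℝ)..T, |(⟪Afg, k (x t)⟫ - ⟪Afg, k (z t)⟫ : ℝ)|)
        ≤ ∫ t in (0:ℝ)..T, ‖Afg‖ * St * B t := by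
      apply intervalIntegral.integral_mono_on hT.le
      · exact (hintx.sub hintz).abs
      · exact ((continuous_const.mul hBc).intervalIntegrable _ _)
      · exact hptbd
    refine hmono.trans ?_
    rw [intervalIntegral.integral_const_mul]
  -- Cauchy–Schwarz
  have hCS : (∫ t in (0:ℝ)..T, B t)
      ≤ Real.sqrt T * Real.sqrt (∫ t in (0:ℝ)..T, (B t) ^ 2) :=
    my_integral_le_sqrt_mul_sqrt hBc hT
  -- identify ∫ B² with the stated integral
  have hKeq : (∫ t in (0:ℝ)..T, (B t) ^ 2)
      = ∫ t in (0:ℝ)..T, Real.exp (2 * L * t) *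
          (∫ τ in (0:ℝ)..t, Real.exp (-L * τ) * ‖η (x τ)‖) ^ 2 := by
    apply intervalIntegral.integral_congr
    intro t ht
    rw [Set.uIcc_of_le hT.le] at ht
    have hwt : w t = ∫ τ in (0:ℝ)..t, Real.exp (-L * τ) * ‖η (x τ)‖ := by
      apply intervalIntegral.integral_congr
      intro τ hτ
      rw [Set.uIcc_of_le ht.1] at hτ
      have hτ' : τ ∈ Set.Icc (0:ℝ) T := ⟨hτ.1, hτ.2.trans ht.2⟩
      simp only [hφdef]
      rw [hxceq τ hτ']
    simp only [hBdef]
    rw [← hwt, mul_pow, sq (Real.exp (L * t)), ← Real.exp_add]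
    congr 2
    ring
  -- assemble
  have hsplit : (⟪Afg + Aηg, Γx⟫ : ℝ) - ⟪Afg, Γz⟫
      = ⟪Aηg, Γx⟫ + (⟪Afg, Γx⟫ - ⟪Afg, Γz⟫) := by
    rw [inner_add_left]; ring
  rw [hsplit]
  have h1 : |(⟪Aηg, Γx⟫ : ℝ)| ≤ ‖Aηg‖ * ‖Γx‖ := abs_real_inner_le_norm _ _
  have h2 : |⟪Afg, Γx⟫ - ⟪Afg, Γz⟫|
      ≤ ‖Afg‖ * St * (Real.sqrt T * Real.sqrt (∫ t in (0:ℝ)..T, (B t) ^ 2)) := by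
    refine hsecond.trans ?_
    exact mul_le_mul_of_nonneg_left hCS (mul_nonneg (norm_nonneg _) hSt)
  calc |(⟪Aηg, Γx⟫ : ℝ) + (⟪Afg, Γx⟫ - ⟪Afg, Γz⟫)|
      ≤ |(⟪Aηg, Γx⟫ : ℝ)| + |⟪Afg, Γx⟫ - ⟪Afg, Γz⟫| := abs_add_le _ _
    _ ≤ ‖Aηg‖ * ‖Γx‖ + ‖Afg‖ * St *
          (Real.sqrt T * Real.sqrt (∫ t in (0:ℝ)..T, (B t) ^ 2)) := by
        exact add_le_add h1 h2
    _ = ‖Aηg‖ * ‖Γx‖ + ‖Afg‖ * St * Real.sqrt T *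
          Real.sqrt (∫ t in (0:ℝ)..T, Real.exp (2 * L * t) *
            (∫ τ in (0:ℝ)..t, Real.exp (-L * τ) * ‖η (x τ)‖) ^ 2) := by
        rw [← hKeq]; ring
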